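/- The growth function of the monoid S′ generated by g₀ and g₁ satisfies Γ′(n) = 3n for all n ≥ 1 (and Γ′(0) = 1): the elements of length at most n are exactly g₁^p for 0 ≤ p ≤ n, g₁^p ∘ g₀ for 0 ≤ p ≤ n−1, and g₁^p ∘ g₀ ∘ g₁ for 0 ≤ p ≤ n−2. -/

import Mathlib

/- The automaton transformation `g₀` of the limit automaton `I′` acting on
infinite words over a countably infinite alphabet, `u : ℕ → ℕ`: if `u` is
identically `0` it returns the constant sequence `1`; otherwise, with `j` the
least index where `u j ≠ 0`, positions `≤ j` become `1` and the rest are kept. -/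
open Classical in
noncomputable def g0 (u : ℕ → ℕ) : ℕ → ℕ :=
  if h : ∃ j, u j ≠ 0 then
    fun i => if i ≤ Nat.find h then 1 else u i
  else fun _ => 1

/- The automaton transformation `g₁` of the limit automaton `I′`: if `u` is
identically `0` it returns the constant sequence `1`; otherwise, with `j` the
least index where `u j ≠ 0`, positions `< j` become `1`, position `j` is
incremented, and the rest are kept. -/
open Classical in
noncomputable def g1 (u : ℕ → ℕ) : ℕ → ℕ :=
  if h : ∃ j, u j ≠ 0 then
    fun i => if i < Nat.find h then 1 else if i = Nat.find h then u i + 1 else u i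
  else fun _ => 1


set_option linter.unnecessarySeqFocus false

lemma g0_of_ne (w : ℕ → ℕ) (hw : w 0 ≠ 0) :
    g0 w = fun i => if i = 0 then 1 else w i := by
  have h : ∃ j, w j ≠ 0 := ⟨0, hw⟩
  have hf : Nat.find h = 0 := (Nat.find_eq_zero h).mpr hw
  funext i
  simp [g0, dif_pos h, hf, Nat.le_zero]

lemma g1_of_ne (w : ℕ → ℕ) (hw : w 0 ≠ 0) :
    g1 w = fun i => if i = 0 then w 0 + 1 else w i := by
  have h : ∃ j, w j ≠ 0 := ⟨0, hw⟩
  have hf : Nat.find h = 0 := (Nat.find_eq_zero h).mpr hw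
  funext i
  by_cases hi : i = 0 <;> simp [g1, dif_pos h, hf, hi]

lemma g0_zero (w : ℕ → ℕ) : g0 w 0 = 1 := by
  by_cases h : ∃ j, w j ≠ 0 <;> simp [g0, h]

lemma g1_zero_ne (w : ℕ → ℕ) : g1 w 0 ≠ 0 := by
  by_cases h : ∃ j, w j ≠ 0
  · rcases Nat.eq_zero_or_pos (Nat.find h) with hf | hf <;>
      simp [g1, h, hf, Nat.not_lt_zero]
  · simp [g1, h]

lemma g0_fix (w : ℕ → ℕ) (hw : w 0 = 1) : g0 w = w := by
  rw [g0_of_ne w (by omega)]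
  funext i
  by_cases hi : i = 0 <;> simp [hi, hw]

lemma iter_g1 (p : ℕ) (w : ℕ → ℕ) (hw : w 0 ≠ 0) :
    g1^[p] w = fun i => if i = 0 then w 0 + p else w i := by
  induction p with
  | zero => funext i; by_cases hi : i = 0 <;> simp [hi]
  | succ k ih =>
    rw [Function.iterate_succ_apply', ih,
      g1_of_ne _ (show (fun i => if i = 0 then w 0 + k else w i) 0 ≠ 0 by simp; omega)]
    funext i
    by_cases hi : i = 0 <;> simp [hi] <;> omega

lemma R1 (u : ℕ → ℕ) : g0 (g0 u) = g0 u :=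
  g0_fix _ (g0_zero u)

lemma R2 (u : ℕ → ℕ) : g0 (g1 (g1 u)) = g0 (g1 u) := by
  have h := g1_zero_ne u
  rw [g1_of_ne _ h,
    g0_of_ne _ (show (fun i => if i = 0 then g1 u 0 + 1 else g1 u i) 0 ≠ 0 by simp),
    g0_of_ne _ h]
  funext i
  by_cases hi : i = 0 <;> simp [hi]

lemma R3 (u : ℕ → ℕ) : g0 (g1 (g0 u)) = g0 u := by
  have h0 : g0 u 0 = 1 := g0_zero u
  rw [g1_of_ne _ (by omega),
    g0_of_ne _ (show (fun i => if i = 0 then g0 u 0 + 1 else g0 u i) 0 ≠ 0 by simp)]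
  funext i
  by_cases hi : i = 0 <;> simp [hi, h0]

lemma gA (p : ℕ) (u : ℕ → ℕ) : g0 (g1^[p + 1] u) = g0 (g1 u) := by
  induction p generalizing u with
  | zero => simp
  | succ k ih =>
    rw [Function.iterate_succ_apply]
    rw [ih (g1 u), R2]

lemma gB (p : ℕ) (u : ℕ → ℕ) : g0 (g1^[p] (g0 u)) = g0 u := by
  cases p with
  | zero => simpa using R1 u
  | succ k => rw [gA, R3]

lemma foldr_rep (p : ℕ) (s : (ℕ → ℕ) → ℕ → ℕ) :
    (List.replicate p g1).foldr (· ∘ ·) s = g1^[p] ∘ s := by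
  induction p with
  | zero => simp
  | succ k ih =>
    rw [List.replicate_succ, List.foldr_cons, ih, Function.iterate_succ']
    rfl

lemma normal_form (L : List ((ℕ → ℕ) → ℕ → ℕ)) (hL : ∀ g ∈ L, g = g0 ∨ g = g1) :
    ∃ p : ℕ, (p ≤ L.length ∧ L.foldr (· ∘ ·) id = g1^[p]) ∨
      (p + 1 ≤ L.length ∧ L.foldr (· ∘ ·) id = g1^[p] ∘ g0) ∨
      (p + 2 ≤ L.length ∧ L.foldr (· ∘ ·) id = g1^[p] ∘ g0 ∘ g1) := by
  induction L with
  | nil => exact ⟨0, Or.inl ⟨le_refl 0, by simp⟩⟩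
  | cons a L ih =>
    obtain ⟨p, h | h | h⟩ := ih (fun g hg => hL g (List.mem_cons_of_mem a hg)) <;>
      rcases hL a List.mem_cons_self with rfl | rfl <;>
      rw [List.foldr_cons, h.2]
    · -- g0 ∘ g1^[p]
      cases p with
      | zero =>
        refine ⟨0, Or.inr (Or.inl ⟨by simp, ?_⟩)⟩
        funext u; simp
      | succ k =>
        refine ⟨0, Or.inr (Or.inr ⟨by have := h.1; simp at this ⊢; omega, ?_⟩)⟩
        funext u; simpa using gA k u
    · -- g1 ∘ g1^[p]
      exact ⟨p + 1, Or.inl ⟨by simpa using h.1, (Function.iterate_succ' g1 p).symm⟩⟩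
    · -- g0 ∘ (g1^[p] ∘ g0)
      refine ⟨0, Or.inr (Or.inl ⟨by simp, ?_⟩)⟩
      funext u; simpa using gB p u
    · -- g1 ∘ (g1^[p] ∘ g0)
      refine ⟨p + 1, Or.inr (Or.inl ⟨by have := h.1; simp at this ⊢; omega, ?_⟩)⟩
      rw [← Function.comp_assoc, ← Function.iterate_succ']
    · -- g0 ∘ (g1^[p] ∘ g0 ∘ g1)
      refine ⟨0, Or.inr (Or.inr ⟨by have := h.1; simp at this ⊢; omega, ?_⟩)⟩
      funext u; simpa using gB p (g1 u)
    · -- g1 ∘ (g1^[p] ∘ g0 ∘ g1)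
      refine ⟨p + 1, Or.inr (Or.inr ⟨by have := h.1; simp at this ⊢; omega, ?_⟩)⟩
      rw [← Function.comp_assoc, ← Function.comp_assoc, ← Function.iterate_succ',
        Function.comp_assoc]

/- The automaton transformation monoid `S′` generated by `g₀` and `g₁`. -/
def SP : Set ((ℕ → ℕ) → ℕ → ℕ) :=
  {s | ∃ L : List ((ℕ → ℕ) → ℕ → ℕ),
    (∀ g ∈ L, g = g0 ∨ g = g1) ∧ L.foldr (· ∘ ·) id = s}

/- The length `ℓ′(s)`: the least `n` such that `s` is a composition of `n`
maps, each equal to `g₀` or `g₁` (so `ℓ′(id) = 0`). -/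
noncomputable def lenP (s : (ℕ → ℕ) → ℕ → ℕ) : ℕ :=
  sInf {n | ∃ L : List ((ℕ → ℕ) → ℕ → ℕ),
    L.length = n ∧ (∀ g ∈ L, g = g0 ∨ g = g1) ∧ L.foldr (· ∘ ·) id = s}

/- The growth function `Γ′(n) = card {s ∈ S′ : ℓ′(s) ≤ n}`. -/
noncomputable def GammaP (n : ℕ) : ℕ :=
  Set.ncard {s | s ∈ SP ∧ lenP s ≤ n}


lemma witness_ok (p : ℕ) :
    ∀ g ∈ List.replicate p g1, g = g0 ∨ g = g1 := by
  intro g hg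
  exact Or.inr (List.eq_of_mem_replicate hg)

lemma mem_and_len (s : (ℕ → ℕ) → ℕ → ℕ) (L : List ((ℕ → ℕ) → ℕ → ℕ))
    (hL : ∀ g ∈ L, g = g0 ∨ g = g1) (hf : L.foldr (· ∘ ·) id = s) :
    s ∈ SP ∧ lenP s ≤ L.length :=
  ⟨⟨L, hL, hf⟩, Nat.sInf_le ⟨L, rfl, hL, hf⟩⟩

lemma mem_len1 (p : ℕ) : g1^[p] ∈ SP ∧ lenP g1^[p] ≤ p := by
  have := mem_and_len g1^[p] (List.replicate p g1) (witness_ok p)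
    (by rw [foldr_rep]; simp)
  simpa using this

lemma mem_len2 (p : ℕ) : (g1^[p] ∘ g0) ∈ SP ∧ lenP (g1^[p] ∘ g0) ≤ p + 1 := by
  have := mem_and_len (g1^[p] ∘ g0) (List.replicate p g1 ++ [g0])
    (by intro g hg
        rcases List.mem_append.mp hg with h | h
        · exact witness_ok p g h
        · simp at h; exact Or.inl h)
    (by rw [List.foldr_append, foldr_rep]; simp)
  simpa using this

lemma mem_len3 (p : ℕ) :
    (g1^[p] ∘ g0 ∘ g1) ∈ SP ∧ lenP (g1^[p] ∘ g0 ∘ g1) ≤ p + 2 := by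
  have := mem_and_len (g1^[p] ∘ g0 ∘ g1) (List.replicate p g1 ++ [g0, g1])
    (by intro g hg
        rcases List.mem_append.mp hg with h | h
        · exact witness_ok p g h
        · simp at h; rcases h with h | h
          · exact Or.inl h
          · exact Or.inr h)
    (by rw [List.foldr_append, foldr_rep]; simp)
  simpa using this

noncomputable def cw : ℕ → ℕ := fun _ => 1
noncomputable def e2 : ℕ → ℕ := fun i => if i = 2 then 1 else 0

lemma g0_cw : g0 cw = cw := g0_fix cw rfl

lemma g1_cw : g1 cw = fun i => if i = 0 then 2 else 1 := by
  rw [g1_of_ne cw (by simp [cw])]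
  funext i; by_cases hi : i = 0 <;> simp [hi, cw]

lemma g0_g1_cw : g0 (g1 cw) = cw := by
  rw [g1_cw, g0_of_ne _ (by simp)]
  funext i; by_cases hi : i = 0 <;> simp [hi, cw]

lemma iter_cw (p : ℕ) : g1^[p] cw 0 = 1 + p := by
  rw [iter_g1 p cw (by simp [cw])]; simp [cw]

lemma e2_find : ∃ h : ∃ j, e2 j ≠ 0, Nat.find h = 2 := by
  have h : ∃ j, e2 j ≠ 0 := ⟨2, by simp [e2]⟩
  refine ⟨h, ?_⟩
  rw [Nat.find_eq_iff]
  constructor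
  · simp [e2]
  · intro m hm
    interval_cases m <;> simp [e2]

lemma g1_e2_0 : g1 e2 0 = 1 := by
  obtain ⟨h, hf⟩ := e2_find
  simp [g1, dif_pos h, hf]

lemma g1_e2_2 : g1 e2 2 = 2 := by
  obtain ⟨h, hf⟩ := e2_find
  simp only [g1]
  rw [dif_pos h]
  simp only [hf]
  simp [e2]

lemma g0_e2_0 : g0 e2 0 = 1 := g0_zero e2

lemma g0_e2_2 : g0 e2 2 = 1 := by
  obtain ⟨h, hf⟩ := e2_find
  simp [g0, dif_pos h, hf]

-- values of the three families at e2
lemma val1_0 (k : ℕ) : g1^[k + 1] e2 0 = k + 1 := by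
  rw [Function.iterate_succ_apply, iter_g1 k (g1 e2) (by rw [g1_e2_0]; simp)]
  simp [g1_e2_0, Nat.add_comm]

lemma val1_2 (k : ℕ) : g1^[k + 1] e2 2 = 2 := by
  rw [Function.iterate_succ_apply, iter_g1 k (g1 e2) (by rw [g1_e2_0]; simp)]
  simp [g1_e2_2]

lemma val2_0 (p : ℕ) : (g1^[p] ∘ g0) e2 0 = 1 + p := by
  simp only [Function.comp_apply]
  rw [iter_g1 p (g0 e2) (by rw [g0_e2_0]; simp)]
  simp [g0_e2_0]

lemma val2_2 (p : ℕ) : (g1^[p] ∘ g0) e2 2 = 1 := by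
  simp only [Function.comp_apply]
  rw [iter_g1 p (g0 e2) (by rw [g0_e2_0]; simp)]
  simp [g0_e2_2]

lemma g0_g1_e2_0 : g0 (g1 e2) 0 = 1 := g0_zero _
lemma g0_g1_e2_2 : g0 (g1 e2) 2 = 2 := by
  rw [g0_of_ne _ (by rw [g1_e2_0]; simp)]
  simp [g1_e2_2]

lemma val3_0 (p : ℕ) : (g1^[p] ∘ g0 ∘ g1) e2 0 = 1 + p := by
  simp only [Function.comp_apply]
  rw [iter_g1 p (g0 (g1 e2)) (by rw [g0_g1_e2_0]; simp)]
  simp [g0_g1_e2_0]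

lemma val3_2 (p : ℕ) : (g1^[p] ∘ g0 ∘ g1) e2 2 = 2 := by
  simp only [Function.comp_apply]
  rw [iter_g1 p (g0 (g1 e2)) (by rw [g0_g1_e2_0]; simp)]
  simp [g0_g1_e2_2]

-- values at cw
lemma valc1 (p : ℕ) : g1^[p] cw 0 = 1 + p := iter_cw p
lemma valc2 (p : ℕ) : (g1^[p] ∘ g0) cw 0 = 1 + p := by
  simp only [Function.comp_apply, g0_cw]; exact iter_cw p
lemma valc3 (p : ℕ) : (g1^[p] ∘ g0 ∘ g1) cw 0 = 1 + p := by
  simp only [Function.comp_apply, g0_g1_cw]; exact iter_cw p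

lemma D11 {p q : ℕ} (h : g1^[p] = g1^[q]) : p = q := by
  have := congrFun (congrFun h cw) 0
  rw [valc1, valc1] at this; omega

lemma D22 {p q : ℕ} (h : (g1^[p] ∘ g0) = (g1^[q] ∘ g0)) : p = q := by
  have := congrFun (congrFun h cw) 0
  rw [valc2, valc2] at this; omega

lemma D33 {p q : ℕ} (h : (g1^[p] ∘ g0 ∘ g1) = (g1^[q] ∘ g0 ∘ g1)) : p = q := by
  have := congrFun (congrFun h cw) 0
  rw [valc3, valc3] at this; omega

lemma D12 {p q : ℕ} (h : g1^[p] = g1^[q] ∘ g0) : False := by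
  cases p with
  | zero =>
    have := congrFun (congrFun h e2) 0
    rw [val2_0] at this
    simp [e2] at this
    omega
  | succ k =>
    have := congrFun (congrFun h e2) 2
    rw [val1_2, val2_2] at this
    omega

lemma D13 {p q : ℕ} (h : g1^[p] = g1^[q] ∘ g0 ∘ g1) : False := by
  cases p with
  | zero =>
    have := congrFun (congrFun h e2) 2
    rw [val3_2] at this
    simp [e2] at this
  | succ k =>
    have h1 := congrFun (congrFun h cw) 0
    rw [valc1, valc3] at h1
    have h2 := congrFun (congrFun h e2) 0
    rw [val1_0, val3_0] at h2
    omega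

lemma D23 {p q : ℕ} (h : (g1^[p] ∘ g0) = g1^[q] ∘ g0 ∘ g1) : False := by
  have := congrFun (congrFun h e2) 2
  rw [val2_2, val3_2] at this
  omega

lemma set_eq (n : ℕ) :
    {s | s ∈ SP ∧ lenP s ≤ n} =
      {s | ∃ p : ℕ, (p ≤ n ∧ s = g1^[p]) ∨
        (p + 1 ≤ n ∧ s = g1^[p] ∘ g0) ∨
        (p + 2 ≤ n ∧ s = g1^[p] ∘ g0 ∘ g1)} := by
  ext s
  simp only [Set.mem_setOf_eq]
  constructor
  · rintro ⟨hSP, hlen⟩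
    obtain ⟨L0, hL0, hf0⟩ := hSP
    have hne : {m | ∃ L : List ((ℕ → ℕ) → ℕ → ℕ),
        L.length = m ∧ (∀ g ∈ L, g = g0 ∨ g = g1) ∧
        L.foldr (· ∘ ·) id = s}.Nonempty := ⟨L0.length, L0, rfl, hL0, hf0⟩
    obtain ⟨L, hLlen, hL, hf⟩ := Nat.sInf_mem hne
    have hlen' : L.length ≤ n := by rw [hLlen]; exact hlen
    obtain ⟨p, h | h | h⟩ := normal_form L hL
    · exact ⟨p, Or.inl ⟨le_trans h.1 hlen', by rw [← hf, h.2]⟩⟩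
    · exact ⟨p, Or.inr (Or.inl ⟨le_trans h.1 hlen', by rw [← hf, h.2]⟩)⟩
    · exact ⟨p, Or.inr (Or.inr ⟨le_trans h.1 hlen', by rw [← hf, h.2]⟩)⟩
  · rintro ⟨p, ⟨hp, rfl⟩ | ⟨hp, rfl⟩ | ⟨hp, rfl⟩⟩
    · exact ⟨(mem_len1 p).1, le_trans (mem_len1 p).2 hp⟩
    · exact ⟨(mem_len2 p).1, le_trans (mem_len2 p).2 hp⟩
    · exact ⟨(mem_len3 p).1, le_trans (mem_len3 p).2 hp⟩

lemma ncard_Iio (k : ℕ) : (Set.Iio k).ncard = k := by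
  rw [← Finset.coe_range, Set.ncard_coe_finset, Finset.card_range]


/-- `Γ′(0) = 1` and `Γ′(n) = 3n` for `n ≥ 1`: the elements of length at most
`n` are exactly `g₁^p` (`0 ≤ p ≤ n`), `g₁^p ∘ g₀` (`0 ≤ p ≤ n−1`) and
`g₁^p ∘ g₀ ∘ g₁` (`0 ≤ p ≤ n−2`). -/
theorem GammaP_eq_three_n :
    GammaP 0 = 1 ∧
    ∀ n : ℕ, 1 ≤ n → GammaP n = 3 * n ∧
      {s | s ∈ SP ∧ lenP s ≤ n} =
        {s | ∃ p : ℕ, (p ≤ n ∧ s = g1^[p]) ∨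
          (p + 1 ≤ n ∧ s = g1^[p] ∘ g0) ∨
          (p + 2 ≤ n ∧ s = g1^[p] ∘ g0 ∘ g1)} := by
  constructor
  · have h0 : {s | s ∈ SP ∧ lenP s ≤ 0} = {id} := by
      rw [set_eq 0]
      ext s
      simp only [Set.mem_setOf_eq, Set.mem_singleton_iff]
      constructor
      · rintro ⟨p, ⟨hp, rfl⟩ | ⟨hp, rfl⟩ | ⟨hp, rfl⟩⟩
        · have : p = 0 := by omega
          subst this; simp
        · omega
        · omega
      · rintro rfl
        exact ⟨0, Or.inl ⟨le_refl 0, by simp⟩⟩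
    rw [GammaP, h0, Set.ncard_singleton]
  · intro n hn
    refine ⟨?_, set_eq n⟩
    rw [GammaP, set_eq n]
    have hun : {s | ∃ p : ℕ, (p ≤ n ∧ s = g1^[p]) ∨
          (p + 1 ≤ n ∧ s = g1^[p] ∘ g0) ∨
          (p + 2 ≤ n ∧ s = g1^[p] ∘ g0 ∘ g1)} =
        (fun p => g1^[p]) '' Set.Iio (n + 1) ∪
        (fun p => g1^[p] ∘ g0) '' Set.Iio n ∪
        (fun p => g1^[p] ∘ g0 ∘ g1) '' Set.Iio (n - 1) := by
      ext s
      simp only [Set.mem_setOf_eq, Set.mem_union, Set.mem_image, Set.mem_Iio]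
      constructor
      · rintro ⟨p, ⟨hp, rfl⟩ | ⟨hp, rfl⟩ | ⟨hp, rfl⟩⟩
        · exact Or.inl (Or.inl ⟨p, by omega, rfl⟩)
        · exact Or.inl (Or.inr ⟨p, by omega, rfl⟩)
        · exact Or.inr ⟨p, by omega, rfl⟩
      · rintro ((⟨p, hp, rfl⟩ | ⟨p, hp, rfl⟩) | ⟨p, hp, rfl⟩)
        · exact ⟨p, Or.inl ⟨by omega, rfl⟩⟩
        · exact ⟨p, Or.inr (Or.inl ⟨by omega, rfl⟩)⟩
        · exact ⟨p, Or.inr (Or.inr ⟨by omega, rfl⟩)⟩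
    rw [hun]
    have fA : ((fun p => g1^[p]) '' Set.Iio (n + 1)).Finite :=
      (Set.finite_Iio _).image _
    have fB : ((fun p => g1^[p] ∘ g0) '' Set.Iio n).Finite :=
      (Set.finite_Iio _).image _
    have fC : ((fun p => g1^[p] ∘ g0 ∘ g1) '' Set.Iio (n - 1)).Finite :=
      (Set.finite_Iio _).image _
    have dAB : Disjoint ((fun p => g1^[p]) '' Set.Iio (n + 1))
        ((fun p => g1^[p] ∘ g0) '' Set.Iio n) := by
      rw [Set.disjoint_left]
      rintro s ⟨p, _, rfl⟩ ⟨q, _, hq⟩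
      exact D12 hq.symm
    have dABC : Disjoint ((fun p => g1^[p]) '' Set.Iio (n + 1) ∪
        (fun p => g1^[p] ∘ g0) '' Set.Iio n)
        ((fun p => g1^[p] ∘ g0 ∘ g1) '' Set.Iio (n - 1)) := by
      rw [Set.disjoint_left]
      rintro s (⟨p, _, rfl⟩ | ⟨p, _, rfl⟩) ⟨q, _, hq⟩
      · exact D13 hq.symm
      · exact D23 hq.symm
    rw [Set.ncard_union_eq dABC (fA.union fB) fC,
      Set.ncard_union_eq dAB fA fB,
      Set.ncard_image_of_injective _ (fun p q h => D11 h),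
      Set.ncard_image_of_injective _ (fun p q h => D22 h),
      Set.ncard_image_of_injective _ (fun p q h => D33 h),
      ncard_Iio, ncard_Iio, ncard_Iio]
    omega
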